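/- Let A ∈ M_2(ℂ) be a nonzero matrix of rank one with tr A = 0. Then F_N(A) is symmetric across every line through the origin; equivalently, F_N(A) is invariant under complex conjugation composed with any rotation, and in fact F_N(A) is a disk centered at the origin (the open unit disk). -/

import Mathlib

open Matrix

set_option maxHeartbeats 1000000

noncomputable def fN {n : ℕ} (A : Matrix (Fin n) (Fin n) ℂ)
    (x : EuclideanSpace ℂ (Fin n)) : ℂ :=
  (inner ℂ x (Matrix.toEuclideanLin A x) : ℂ) /
    ((‖x‖ * ‖Matrix.toEuclideanLin A x‖ : ℝ) : ℂ)

noncomputable def FN {n : ℕ} (A : Matrix (Fin n) (Fin n) ℂ) : Set ℂ :=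
  {z | ∃ x : EuclideanSpace ℂ (Fin n), Matrix.toEuclideanLin A x ≠ 0 ∧ z = fN A x}

lemma FN_eq_ball (A : Matrix (Fin 2) (Fin 2) ℂ) (u w : Fin 2 → ℂ)
    (hu : ¬ (u 0 = 0 ∧ u 1 = 0)) (hw : ¬ (w 0 = 0 ∧ w 1 = 0))
    (huw : u 0 * w 0 + u 1 * w 1 = 0)
    (hAij : ∀ i j, A i j = u i * w j) :
    FN A = Metric.ball (0 : ℂ) 1 := by
  classical
  set U : EuclideanSpace ℂ (Fin 2) := (WithLp.equiv 2 _).symm u with hUdef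
  set V : EuclideanSpace ℂ (Fin 2) := (WithLp.equiv 2 _).symm (fun i => (starRingEnd ℂ) (w i)) with hVdef
  have hUi : ∀ i, U i = u i := fun _ => rfl
  have hVi : ∀ i, V i = (starRingEnd ℂ) (w i) := fun _ => rfl
  have hU : U ≠ 0 := by
    intro h
    have h0 : U 0 = 0 := by simp [h]
    have h1 : U 1 = 0 := by simp [h]
    rw [hUi] at h0 h1
    exact hu ⟨h0, h1⟩
  have hV : V ≠ 0 := by
    intro h
    have h0 : V 0 = 0 := by simp [h]
    have h1 : V 1 = 0 := by simp [h]
    rw [hVi] at h0 h1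
    exact hw ⟨by simpa using congrArg (starRingEnd ℂ) h0,
      by simpa using congrArg (starRingEnd ℂ) h1⟩
  have hApp : ∀ x : EuclideanSpace ℂ (Fin 2),
      Matrix.toEuclideanLin A x = (inner ℂ V x : ℂ) • U := by
    intro x
    ext i
    have h1 : toEuclideanLin A x i = ∑ j, A i j * x j := by
      simp [toEuclideanLin_apply, mulVec, dotProduct]
      fin_cases i <;> simp
    have hsm : ((inner ℂ V x : ℂ) • U) i = (inner ℂ V x : ℂ) * u i := rfl
    rw [h1, hsm]
    simp only [PiLp.inner_apply, hVi, RCLike.inner_apply, Fin.sum_univ_two,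
      starRingEnd_self_apply, hAij]
    ring
  have hVU : (inner ℂ V U : ℂ) = 0 := by
    simp only [PiLp.inner_apply, hVi, hUi, RCLike.inner_apply, Fin.sum_univ_two,
      starRingEnd_self_apply]
    linear_combination huw
  have hUV : (inner ℂ U V : ℂ) = 0 := by
    rw [← inner_conj_symm, hVU, map_zero]
  ext z
  simp only [FN, Set.mem_setOf_eq, Metric.mem_ball, dist_zero_right]
  constructor
  · rintro ⟨x, hx, rfl⟩
    set k : ℂ := inner ℂ V x with hk
    have hAx : Matrix.toEuclideanLin A x = k • U := hApp x
    have hk0 : k ≠ 0 := fun h => hx (by rw [hAx, h, zero_smul])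
    have hx0 : x ≠ 0 := fun h => hx (by rw [h, map_zero])
    have hlt : ‖(inner ℂ x U : ℂ)‖ < ‖x‖ * ‖U‖ := by
      rcases lt_or_eq_of_le (norm_inner_le_norm (𝕜 := ℂ) x U) with h | h
      · exact h
      · exfalso
        obtain ⟨r, hr0, hrU⟩ := (norm_inner_eq_norm_iff hx0 hU).mp h
        apply hk0
        have h2 : (inner ℂ V U : ℂ) = r * k := by rw [hrU, inner_smul_right, hk]
        exact (mul_eq_zero.mp (h2.symm.trans hVU)).resolve_left hr0
    rw [fN, hAx, inner_smul_right]
    have hnAx : ‖k • U‖ = ‖k‖ * ‖U‖ := by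
      rw [norm_smul]
    rw [hnAx, norm_div, norm_mul]
    have hxn : (0:ℝ) < ‖x‖ := norm_pos_iff.mpr hx0
    have hUn : (0:ℝ) < ‖U‖ := norm_pos_iff.mpr hU
    have hkn : (0:ℝ) < ‖k‖ := by
      simpa using norm_pos_iff.mpr hk0
    have habs : ‖((‖x‖ * (‖k‖ * ‖U‖) : ℝ) : ℂ)‖
        = ‖x‖ * (‖k‖ * ‖U‖) := by
      rw [Complex.norm_real, Real.norm_eq_abs, abs_of_pos (by positivity)]
    rw [habs, div_lt_one (by positivity)]
    calc ‖k‖ * ‖(inner ℂ x U : ℂ)‖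
        < ‖k‖ * (‖x‖ * ‖U‖) := by
          apply mul_lt_mul_of_pos_left _ hkn
          simpa using hlt
      _ = ‖x‖ * (‖k‖ * ‖U‖) := by ring
  · intro hz
    set r : ℝ := ‖z‖ with hr
    have hr1 : r < 1 := hz
    have hr0 : 0 ≤ r := norm_nonneg z
    set R : ℝ := Real.sqrt (1 - r ^ 2) with hRdef
    have hR2 : R ^ 2 = 1 - r ^ 2 := Real.sq_sqrt (by nlinarith)
    have hRpos : 0 < R := Real.sqrt_pos.mpr (by nlinarith)
    have hUn : (0:ℝ) < ‖U‖ := norm_pos_iff.mpr hU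
    have hVn : (0:ℝ) < ‖V‖ := norm_pos_iff.mpr hV
    set s : ℂ := (starRingEnd ℂ) z / ((‖U‖ * R : ℝ) : ℂ) with hs
    set t : ℂ := ((‖V‖ : ℝ) : ℂ)⁻¹ with ht
    have hVne : ((‖V‖ : ℝ) : ℂ) ≠ 0 := by simpa using hVn.ne'
    have hUne : ((‖U‖ : ℝ) : ℂ) ≠ 0 := by simpa using hUn.ne'
    have hRne : ((R : ℝ) : ℂ) ≠ 0 := by simpa using hRpos.ne'
    have hinnerVx : (inner ℂ V (s • U + t • V) : ℂ) = (‖V‖ : ℂ) := by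
      rw [inner_add_right, inner_smul_right, inner_smul_right, hVU,
        inner_self_eq_norm_sq_to_K, ht]
      field_simp
      ring_nf
      rfl
    have hAx : Matrix.toEuclideanLin A (s • U + t • V) = ((‖V‖ : ℝ) : ℂ) • U := by
      rw [hApp _, hinnerVx]
    have hAx0 : Matrix.toEuclideanLin A (s • U + t • V) ≠ 0 := by
      rw [hAx]
      simp only [ne_eq, smul_eq_zero, not_or]
      exact ⟨hVne, hU⟩
    have hinnerxU : (inner ℂ (s • U + t • V) U : ℂ)
        = (starRingEnd ℂ) s * ((‖U‖ : ℝ) : ℂ) ^ 2 := by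
      rw [inner_add_left, inner_smul_left, inner_smul_left, hVU,
        inner_self_eq_norm_sq_to_K]
      simp only [mul_zero, add_zero]
      norm_cast
    have horth : (inner ℂ (s • U) (t • V) : ℂ) = 0 := by
      rw [inner_smul_left, inner_smul_right, hUV]; ring
    have hsq := norm_add_sq_eq_norm_sq_add_norm_sq_of_inner_eq_zero _ _ horth
    have hsU : ‖s • U‖ = r / R := by
      rw [norm_smul, hs, norm_div]
      rw [Complex.norm_conj, Complex.norm_real, Real.norm_eq_abs, abs_of_pos (by positivity)]
      rw [← hr]
      field_simp
    have htV : ‖t • V‖ = 1 := by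
      rw [norm_smul, ht]
      simp only [norm_inv, Complex.norm_real, Real.norm_eq_abs, abs_of_pos hVn]
      field_simp
    have hn2 : ‖s • U + t • V‖ ^ 2 = (1 / R) ^ 2 := by
      have := hsq
      rw [hsU, htV] at this
      have h2 : ‖s • U + t • V‖ ^ 2 = (r / R) * (r / R) + 1 * 1 := by
        rw [pow_two]; exact this
      rw [h2]
      field_simp
      nlinarith [hR2]
    have hnormx : ‖s • U + t • V‖ = 1 / R := by
      have h1R : (0:ℝ) ≤ 1 / R := by positivity
      nlinarith [norm_nonneg (s • U + t • V), hn2]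
    refine ⟨s • U + t • V, hAx0, ?_⟩
    rw [fN, hAx, inner_smul_right, hinnerxU, hnormx]
    have hnsU : ‖((‖V‖ : ℝ) : ℂ) • U‖ = ‖V‖ * ‖U‖ := by
      rw [norm_smul]
      simp [abs_of_pos hVn]
    rw [hnsU, hs]
    have h1 : (starRingEnd ℂ) ((starRingEnd ℂ) z / ((‖U‖ * R : ℝ) : ℂ)) =
        z / ((‖U‖ * R : ℝ) : ℂ) := by
      rw [map_div₀, Complex.conj_conj, Complex.conj_ofReal]
    rw [h1]
    push_cast
    field_simp

theorem stmt15 (A : Matrix (Fin 2) (Fin 2) ℂ) (hA : A ≠ 0)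
    (hdet : A.det = 0) (htr : A.trace = 0) :
    (∀ θ : ℝ, ∀ z ∈ FN A,
        Complex.exp (2 * θ * Complex.I) * (starRingEnd ℂ z) ∈ FN A) ∧
      FN A = Metric.ball (0 : ℂ) 1 := by
  have htr2 : A 0 0 + A 1 1 = 0 := by rw [← Matrix.trace_fin_two]; exact htr
  have hdet2 : A 0 0 * A 1 1 - A 0 1 * A 1 0 = 0 := by
    rw [← Matrix.det_fin_two]; exact hdet
  have key : FN A = Metric.ball (0 : ℂ) 1 := by
    by_cases hb : A 0 1 = 0
    · have h00 : A 0 0 = 0 := by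
        have h : A 0 0 * A 0 0 = 0 := by linear_combination A 0 0 * htr2 - hdet2 - A 1 0 * hb
        exact mul_self_eq_zero.mp h
      have h11 : A 1 1 = 0 := by linear_combination htr2 - h00
      have hc : A 1 0 ≠ 0 := by
        intro hc0
        apply hA
        ext i j
        fin_cases i <;> fin_cases j <;>
          simp [h00, h11, hb, hc0]
      apply FN_eq_ball A ![0, 1] ![A 1 0, 0]
      · simp
      · simp [hc]
      · simp
      · intro i j
        fin_cases i <;> fin_cases j <;> simp [h00, h11, hb]
    · apply FN_eq_ball A ![1, -A 0 0 / A 0 1] ![A 0 0, A 0 1]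
      · simp
      · simp [hb]
      · simp [hb]
      · intro i j
        fin_cases i <;> fin_cases j <;> simp
        · field_simp
          linear_combination A 0 0 * htr2 - hdet2
        · field_simp
          linear_combination htr2
  refine ⟨?_, key⟩
  intro θ z hz
  rw [key] at hz ⊢
  rw [Metric.mem_ball, dist_zero_right] at hz ⊢
  have he : ‖Complex.exp (2 * θ * Complex.I)‖ = 1 := by
    rw [Complex.norm_exp]
    simp
  calc ‖Complex.exp (2 * θ * Complex.I) * (starRingEnd ℂ) z‖
      = ‖Complex.exp (2 * θ * Complex.I)‖ * ‖(starRingEnd ℂ) z‖ := by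
        rw [norm_mul]
    _ = ‖z‖ := by rw [he, one_mul, Complex.norm_conj]
    _ < 1 := hz
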